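/- Let P be a set of points on the future light cone ℒ³₊ ⊂ ℝ^{1,3} such that the associated horoballs {B_y : y ∈ P} are pairwise disjoint. Then for every h > 0 the set {p ∈ P : p₀ ≤ h} is finite; in particular P is discrete. -/

import Mathlib

/-- The Minkowski bilinear form on ℝ^{1,3}. -/
def mink3 (x y : Fin 4 → ℝ) : ℝ :=
  -(x 0 * y 0) + x 1 * y 1 + x 2 * y 2 + x 3 * y 3

/-- The horoball associated to a point of the future light cone. -/
def horoball (y : Fin 4 → ℝ) : Set (Fin 4 → ℝ) :=
  {x | mink3 x x = -1 ∧ 0 < x 0 ∧ mink3 x y ≥ -1}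

/-- Cauchy–Schwarz: the Minkowski product of two future light-cone points is ≤ 0. -/
lemma mink3_nonpos (y y' : Fin 4 → ℝ) (hy : mink3 y y = 0) (hy' : mink3 y' y' = 0)
    (h0 : 0 < y 0) (h0' : 0 < y' 0) : mink3 y y' ≤ 0 := by
  simp only [mink3] at *
  nlinarith [sq_nonneg (y 1 * y' 2 - y 2 * y' 1), sq_nonneg (y 1 * y' 3 - y 3 * y' 1),
    sq_nonneg (y 2 * y' 3 - y 3 * y' 2),
    sq_nonneg (y 1 * y' 1 + y 2 * y' 2 + y 3 * y' 3 - y 0 * y' 0),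
    mul_pos h0 h0']

/-- If the Minkowski product of two light-cone points is ≥ -2, their horoballs meet. -/
lemma horoball_meet (y y' : Fin 4 → ℝ) (hy : mink3 y y = 0) (hy' : mink3 y' y' = 0)
    (h0 : 0 < y 0) (h0' : 0 < y' 0) (hq : -2 ≤ mink3 y y') :
    ∃ x, x ∈ horoball y ∧ x ∈ horoball y' := by
  rcases eq_or_lt_of_le (mink3_nonpos y y' hy hy' h0 h0') with hz | hneg
  · -- parallel case: mink3 y y' = 0
    obtain ⟨b, hb⟩ : ∃ b : ℝ, b = 1 / (y 0 + y' 0) := ⟨_, rfl⟩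
    have hbpos : 0 < b := by rw [hb]; positivity
    have hbs : b * (y 0 + y' 0) = 1 := by rw [hb]; field_simp
    obtain ⟨a, ha⟩ : ∃ a : ℝ, a = (1 - b ^ 2) / 2 := ⟨_, rfl⟩
    have ha2 : 2 * a = 1 - b ^ 2 := by rw [ha]; ring
    refine ⟨![a * (y 0 + y' 0) + b, a * (y 1 + y' 1), a * (y 2 + y' 2), a * (y 3 + y' 3)],
      ?_, ?_⟩ <;>
      simp only [horoball, mink3, Set.mem_setOf_eq, Matrix.cons_val_zero, Matrix.cons_val_one,
        Matrix.head_cons, Matrix.cons_val_two, Matrix.tail_cons, Matrix.cons_val_three]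
        at hy hy' hz ⊢ <;>
      refine ⟨?_, ?_, ?_⟩
    · linear_combination a ^ 2 * hy + a ^ 2 * hy' + 2 * a ^ 2 * hz - 2 * a * hbs - ha2
    · have key : 2 * b * (a * (y 0 + y' 0) + b) = 1 + b ^ 2 := by
        linear_combination 2 * a * hbs + ha2
      nlinarith [sq_nonneg b]
    · have key : -((a * (y 0 + y' 0) + b) * y 0) + a * (y 1 + y' 1) * y 1
          + a * (y 2 + y' 2) * y 2 + a * (y 3 + y' 3) * y 3 = -(b * y 0) := by
        linear_combination a * hy + a * hz
      rw [key]
      nlinarith [mul_pos hbpos h0']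
    · linear_combination a ^ 2 * hy + a ^ 2 * hy' + 2 * a ^ 2 * hz - 2 * a * hbs - ha2
    · have key : 2 * b * (a * (y 0 + y' 0) + b) = 1 + b ^ 2 := by
        linear_combination 2 * a * hbs + ha2
      nlinarith [sq_nonneg b]
    · have key : -((a * (y 0 + y' 0) + b) * y' 0) + a * (y 1 + y' 1) * y' 1
          + a * (y 2 + y' 2) * y' 2 + a * (y 3 + y' 3) * y' 3 = -(b * y' 0) := by
        linear_combination a * hy' + a * hz
      rw [key]
      nlinarith [mul_pos hbpos h0]
  · -- transversal case: -2 ≤ mink3 y y' < 0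
    obtain ⟨q, hq'⟩ : ∃ q : ℝ, mink3 y y' = -q := ⟨_, (neg_neg _).symm⟩
    have hqpos : 0 < q := by linarith
    have hq2 : q ≤ 2 := by linarith
    obtain ⟨c, hc⟩ : ∃ c : ℝ, c = (Real.sqrt (2 * q))⁻¹ := ⟨_, rfl⟩
    have hsq : Real.sqrt (2 * q) ^ 2 = 2 * q := Real.sq_sqrt (by linarith)
    have hsqpos : 0 < Real.sqrt (2 * q) := Real.sqrt_pos.mpr (by linarith)
    have hcpos : 0 < c := by rw [hc]; positivity
    have hc2 : c ^ 2 * (2 * q) = 1 := by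
      rw [hc, ← hsq]; field_simp; rw [Real.sq_sqrt (sq_nonneg (Real.sqrt (2 * q)))]
    have hcq : c * q ≤ 1 := by
      have h1 : c ^ 2 * q ^ 2 = q / 2 := by linear_combination (q / 2) * hc2
      nlinarith [sq_nonneg (c * q - 1)]
    refine ⟨fun i => c * (y i + y' i), ?_, ?_⟩ <;>
      simp only [horoball, mink3, Set.mem_setOf_eq] at hy hy' hq' ⊢ <;>
      refine ⟨?_, ?_, ?_⟩
    · linear_combination c ^ 2 * hy + c ^ 2 * hy' + 2 * c ^ 2 * hq' - hc2
    · positivity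
    · have key : -(c * (y 0 + y' 0) * y 0) + c * (y 1 + y' 1) * y 1
          + c * (y 2 + y' 2) * y 2 + c * (y 3 + y' 3) * y 3 = -(c * q) := by
        linear_combination c * hy + c * hq'
      rw [key]; linarith
    · linear_combination c ^ 2 * hy + c ^ 2 * hy' + 2 * c ^ 2 * hq' - hc2
    · positivity
    · have key : -(c * (y 0 + y' 0) * y' 0) + c * (y 1 + y' 1) * y' 1
          + c * (y 2 + y' 2) * y' 2 + c * (y 3 + y' 3) * y' 3 = -(c * q) := by
        linear_combination c * hy' + c * hq'
      rw [key]; linarith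

/-- If the horoballs associated to a family P of light-cone points are pairwise
disjoint, then the part of P with bounded first coordinate is finite; in
particular P is discrete. -/
theorem stmt_12 (P : Set (Fin 4 → ℝ))
    (hP : ∀ y ∈ P, mink3 y y = 0 ∧ 0 < y 0)
    (hdisj : ∀ y ∈ P, ∀ y' ∈ P, y ≠ y' → Disjoint (horoball y) (horoball y')) :
    ∀ h : ℝ, 0 < h → {p ∈ P | p 0 ≤ h}.Finite := by
  intro h hpos
  set S := {p ∈ P | p 0 ≤ h} with hS
  -- separation: distinct points of S are at sup-distance > 1
  have hsep : ∀ p ∈ S, ∀ p' ∈ S, p ≠ p' → 1 < dist p p' := by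
    intro p hp p' hp' hne
    obtain ⟨hpP, hph⟩ := hp
    obtain ⟨hp'P, hp'h⟩ := hp'
    obtain ⟨hy, h0⟩ := hP p hpP
    obtain ⟨hy', h0'⟩ := hP p' hp'P
    have hq : mink3 p p' < -2 := by
      by_contra hle
      push_neg at hle
      obtain ⟨x, hx1, hx2⟩ := horoball_meet p p' hy hy' h0 h0' hle
      exact Set.disjoint_left.mp (hdisj p hpP p' hp'P hne) hx1 hx2
    -- spatial separation
    have hsum : (p 1 - p' 1) ^ 2 + (p 2 - p' 2) ^ 2 + (p 3 - p' 3) ^ 2 > 4 := by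
      simp only [mink3] at hy hy' hq
      nlinarith [sq_nonneg (p 0 - p' 0)]
    have : ∃ i : Fin 4, 1 < |p i - p' i| := by
      by_contra hall
      push_neg at hall
      have h1 := abs_le.mp (hall 1)
      have h2 := abs_le.mp (hall 2)
      have h3 := abs_le.mp (hall 3)
      nlinarith [h1.1, h1.2, h2.1, h2.2, h3.1, h3.2]
    obtain ⟨i, hi⟩ := this
    calc 1 < |p i - p' i| := hi
    _ = dist (p i) (p' i) := (Real.dist_eq _ _).symm
    _ ≤ dist p p' := dist_le_pi_dist p p' i
  -- boundedness
  have hbdd : S ⊆ Metric.closedBall 0 h := by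
    intro p hp
    obtain ⟨hpP, hph⟩ := hp
    obtain ⟨hy, h0⟩ := hP p hpP
    rw [Metric.mem_closedBall, dist_zero_right]
    refine (pi_norm_le_iff_of_nonneg (le_of_lt hpos)).mpr fun i => ?_
    simp only [mink3] at hy
    have hi : i = 0 ∨ i = 1 ∨ i = 2 ∨ i = 3 := by omega
    have hcoord : (p i) ^ 2 ≤ h ^ 2 := by
      rcases hi with rfl | rfl | rfl | rfl <;> nlinarith
    rw [Real.norm_eq_abs]
    nlinarith [abs_nonneg (p i), sq_abs (p i)]
  -- conclusion: an infinite separated set in a compact ball has an accumulation point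
  by_contra hfin
  have hinf : S.Infinite := hfin
  obtain ⟨x, -, hx⟩ := hinf.exists_accPt_of_subset_isCompact
    (isCompact_closedBall (0 : Fin 4 → ℝ) h) hbdd
  rw [accPt_iff_nhds] at hx
  obtain ⟨p, ⟨hpball, hpS⟩, hpne⟩ := hx (Metric.ball x (1/2)) (Metric.ball_mem_nhds x (by norm_num))
  have hd : 0 < dist p x := dist_pos.mpr hpne
  obtain ⟨p', ⟨hp'ball, hp'S⟩, hp'ne⟩ := hx (Metric.ball x (min (1/2) (dist p x)))
    (Metric.ball_mem_nhds x (by positivity))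
  have hne : p ≠ p' := by
    intro he
    rw [← he] at hp'ball
    exact absurd (Metric.mem_ball.mp hp'ball) (not_lt.mpr (min_le_right _ _))
  have := hsep p hpS p' hp'S hne
  have d1 : dist p x < 1/2 := Metric.mem_ball.mp hpball
  have d2 : dist p' x < 1/2 := lt_of_lt_of_le (Metric.mem_ball.mp hp'ball) (min_le_left _ _)
  have : dist p p' ≤ dist p x + dist x p' := dist_triangle p x p'
  rw [dist_comm x p'] at this
  linarith [hsep p hpS p' hp'S hne]
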